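/- Let E be a Banach space, T > 0, and let A : [0,T] → 𝓛(E) be continuous in the operator norm. Let S(t,s) ∈ 𝓛(E) be defined for 0 ≤ s ≤ t ≤ T with the following properties: (s,t) ↦ S(t,s) is continuous in the operator norm; S(t,t) = I for all t; for every fixed s, the map t ↦ S(t,s) is differentiable on [s,T] with derivative A(t)∘S(t,s); and for every fixed t, the map s ↦ S(t,s) is differentiable on [0,t] with derivative −S(t,s)∘A(s). Let g : [0,T] → E be continuous and define U : [0,T] → E by U(t) = −∫₀ᵗ S(t,s)A(s)(g(t) − g(s)) ds + S(t,0)g(t). Then U is continuous and, for every t ∈ [0,T], U(t) = ∫₀ᵗ A(s)U(s) ds + g(t). -/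

import Mathlib

open Set MeasureTheory

private lemma ftc_aux {E : Type*} [NormedAddCommGroup E] [NormedSpace ℝ E] [CompleteSpace E]
    {f f' : ℝ → E} {a b : ℝ} (hab : a ≤ b)
    (hcont : ContinuousOn f (Icc a b))
    (hd : ∀ x ∈ Icc a b, HasDerivWithinAt f (f' x) (Icc a b) x)
    (hcont' : ContinuousOn f' (Icc a b)) :
    ∫ x in a..b, f' x = f b - f a := by
  refine intervalIntegral.integral_eq_sub_of_hasDeriv_right_of_le hab hcont (fun x hx => ?_)
    (hcont'.intervalIntegrable_of_Icc hab)
  exact (hd x (Ioo_subset_Icc_self hx)).mono_of_mem_nhdsWithin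
    (Icc_mem_nhdsGT_of_mem ⟨hx.1.le, hx.2⟩)

/-- Proposition 4.1 of the paper (deterministic, pathwise form): if `A : [0,T] → 𝓛(E)` is
norm-continuous, `S(t,s)` is the evolution family it generates (continuous on the triangle,
`S(t,t) = I`, `∂ₜ S(t,s) = A(t)S(t,s)`, `∂ₛ S(t,s) = -S(t,s)A(s)`), `g : [0,T] → E` is
continuous and `U(t) = -∫₀ᵗ S(t,s)A(s)(g(t)-g(s)) ds + S(t,0)g(t)`, then `U` is continuous
and satisfies `U(t) = ∫₀ᵗ A(s)U(s) ds + g(t)` for every `t ∈ [0,T]`. -/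
theorem stmt7 {E : Type*} [NormedAddCommGroup E] [NormedSpace ℝ E] [CompleteSpace E]
    (T : ℝ) (hT : 0 < T) (A : ℝ → E →L[ℝ] E) (hA : ContinuousOn A (Icc 0 T))
    (S : ℝ → ℝ → E →L[ℝ] E)
    (hScont : ContinuousOn (fun q : ℝ × ℝ => S q.1 q.2)
      {q : ℝ × ℝ | 0 ≤ q.2 ∧ q.2 ≤ q.1 ∧ q.1 ≤ T})
    (hSid : ∀ t ∈ Icc (0:ℝ) T, S t t = ContinuousLinearMap.id ℝ E)
    (hSderiv_t : ∀ s ∈ Icc (0:ℝ) T, ∀ t ∈ Icc s T,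
      HasDerivWithinAt (fun r => S r s) ((A t).comp (S t s)) (Icc s T) t)
    (hSderiv_s : ∀ t ∈ Icc (0:ℝ) T, ∀ s ∈ Icc (0:ℝ) t,
      HasDerivWithinAt (fun r => S t r) (-(S t s).comp (A s)) (Icc 0 t) s)
    (g : ℝ → E) (hg : ContinuousOn g (Icc 0 T))
    (U : ℝ → E)
    (hU : ∀ t ∈ Icc (0:ℝ) T,
      U t = -(∫ s in Ioo (0:ℝ) t, (S t s) ((A s) (g t - g s))) + (S t 0) (g t)) :
    ContinuousOn U (Icc 0 T) ∧
      ∀ t ∈ Icc (0:ℝ) T, U t = (∫ s in Ioo (0:ℝ) t, (A s) (U s)) + g t := by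
  have hT' : (0:ℝ) ≤ T := hT.le
  -- clamping maps onto the triangle
  set σ : ℝ → ℝ := fun s => min (max s 0) T with hσdef
  set τ : ℝ → ℝ → ℝ := fun t s => min (max t (σ s)) T with hτdef
  have hσmem : ∀ s, σ s ∈ Icc (0:ℝ) T :=
    fun s => ⟨le_min (le_max_right _ _) hT', min_le_right _ _⟩
  have hτmem : ∀ t s, τ t s ∈ Icc (σ s) T :=
    fun t s => ⟨le_min (le_max_right _ _) (hσmem s).2, min_le_right _ _⟩
  have hσeq : ∀ s ∈ Icc (0:ℝ) T, σ s = s := by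
    intro s hs; simp [hσdef, max_eq_left hs.1, min_eq_left hs.2]
  have hτeq : ∀ s ∈ Icc (0:ℝ) T, ∀ t ∈ Icc s T, τ t s = t := by
    intro s hs t ht
    simp [hτdef, hσeq s hs, max_eq_left ht.1, min_eq_left ht.2]
  have hσc : Continuous σ := (continuous_id.max continuous_const).min continuous_const
  have hτc : Continuous fun q : ℝ × ℝ => τ q.1 q.2 :=
    (continuous_fst.max (hσc.comp continuous_snd)).min continuous_const
  -- globally continuous extensions
  have hSc' : Continuous fun q : ℝ × ℝ => S (τ q.1 q.2) (σ q.2) := by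
    have := hScont.comp_continuous (f := fun q : ℝ × ℝ => ((τ q.1 q.2, σ q.2) : ℝ × ℝ))
      (hτc.prodMk (hσc.comp continuous_snd))
      (fun q => ⟨(hσmem q.2).1, (hτmem q.1 q.2).1, (hτmem q.1 q.2).2⟩)
    exact this
  have hAσ : Continuous fun s : ℝ => A (σ s) := hA.comp_continuous hσc hσmem
  have hgσ : Continuous fun s : ℝ => g (σ s) := hg.comp_continuous hσc hσmem
  have hΦc : Continuous fun q : ℝ × ℝ => S (τ q.1 q.2) (σ q.2) ((A (σ q.2)) (g (σ q.2))) :=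
    hSc'.clm_apply ((hAσ.comp continuous_snd).clm_apply (hgσ.comp continuous_snd))
  have hAτ : Continuous fun q : ℝ × ℝ => A (τ q.1 q.2) :=
    hA.comp_continuous hτc (fun q => ⟨(hσmem q.2).1.trans (hτmem q.1 q.2).1, (hτmem q.1 q.2).2⟩)
  have hΨc : Continuous fun q : ℝ × ℝ =>
      (A (τ q.1 q.2)) (S (τ q.1 q.2) (σ q.2) ((A (σ q.2)) (g (σ q.2)))) :=
    hAτ.clm_apply hΦc
  -- the auxiliary function v
  set v : ℝ → E := fun t => ∫ s in Ioo (0:ℝ) t, S t s ((A s) (g s)) with hvdef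
  -- continuity in the second variable on the slice
  have hSt : ∀ t ∈ Icc (0:ℝ) T, ContinuousOn (fun s => S t s) (Icc 0 t) := by
    intro t ht
    have : ContinuousOn ((fun q : ℝ × ℝ => S q.1 q.2) ∘ fun s => ((t, s) : ℝ × ℝ)) (Icc 0 t) :=
      hScont.comp (Continuous.continuousOn (continuous_const.prodMk continuous_id))
        (fun s hs => ⟨hs.1, hs.2, ht.2⟩)
    exact this
  have hsubT : ∀ t ∈ Icc (0:ℝ) T, Icc (0:ℝ) t ⊆ Icc 0 T :=
    fun t ht => Icc_subset_Icc le_rfl ht.2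
  have hfel : ∀ t ∈ Icc (0:ℝ) T, ContinuousOn (fun s => S t s ((A s) (g s))) (Icc 0 t) := by
    intro t ht
    exact (hSt t ht).clm_apply ((hA.mono (hsubT t ht)).clm_apply (hg.mono (hsubT t ht)))
  have hfel2 : ∀ t ∈ Icc (0:ℝ) T, ∀ x : E, ContinuousOn (fun s => S t s ((A s) x)) (Icc 0 t) := by
    intro t ht x
    exact (hSt t ht).clm_apply ((hA.mono (hsubT t ht)).clm_apply continuousOn_const)
  -- Key identity 1: ∫₀ᵗ S(t,s)A(s)x ds = S(t,0)x - x
  have key1 : ∀ t ∈ Icc (0:ℝ) T, ∀ x : E,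
      (∫ s in Ioo (0:ℝ) t, S t s ((A s) x)) = S t 0 x - x := by
    intro t ht x
    have hc : ContinuousOn (fun s => S t s x) (Icc 0 t) :=
      (hSt t ht).clm_apply continuousOn_const
    have hc' : ContinuousOn (fun s => -(S t s ((A s) x))) (Icc 0 t) := (hfel2 t ht x).neg
    have hd : ∀ s ∈ Icc (0:ℝ) t,
        HasDerivWithinAt (fun r => S t r x) (-(S t s ((A s) x))) (Icc 0 t) s := by
      intro s hs
      have := (hSderiv_s t ht s hs).clm_apply (hasDerivWithinAt_const s (Icc 0 t) x)
      simpa using this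
    have hint := ftc_aux ht.1 hc hd hc'
    rw [hSid t ht] at hint
    simp only [ContinuousLinearMap.id_apply, intervalIntegral.integral_neg] at hint
    rw [← integral_Ioc_eq_integral_Ioo, ← intervalIntegral.integral_of_le ht.1]
    exact neg_injective (hint.trans (neg_sub _ _).symm)
  -- U = g + v on [0,T]
  have hUv : ∀ t ∈ Icc (0:ℝ) T, U t = g t + v t := by
    intro t ht
    have h1 : IntegrableOn (fun s => S t s ((A s) (g t))) (Ioo 0 t) :=
      ((hfel2 t ht (g t)).integrableOn_Icc).mono_set Ioo_subset_Icc_self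
    have h2 : IntegrableOn (fun s => S t s ((A s) (g s))) (Ioo 0 t) :=
      ((hfel t ht).integrableOn_Icc).mono_set Ioo_subset_Icc_self
    have hsplit : (∫ s in Ioo (0:ℝ) t, S t s ((A s) (g t - g s)))
        = (∫ s in Ioo (0:ℝ) t, S t s ((A s) (g t)))
          - ∫ s in Ioo (0:ℝ) t, S t s ((A s) (g s)) := by
      rw [← integral_sub h1 h2]
      refine setIntegral_congr_fun measurableSet_Ioo fun s hs => ?_
      simp [map_sub]
    rw [hU t ht, hsplit, key1 t ht (g t)]
    show -(S t 0 (g t) - g t - v t) + S t 0 (g t) = g t + v t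
    abel
  -- continuity of v
  have hwc : Continuous fun t => ∫ s in (0:ℝ)..t, S (τ t s) (σ s) ((A (σ s)) (g (σ s))) := by
    exact intervalIntegral.continuous_parametric_intervalIntegral_of_continuous
      (f := fun t s => S (τ t s) (σ s) ((A (σ s)) (g (σ s)))) hΦc continuous_id
  have hvw : ∀ t ∈ Icc (0:ℝ) T,
      v t = ∫ s in (0:ℝ)..t, S (τ t s) (σ s) ((A (σ s)) (g (σ s))) := by
    intro t ht
    rw [intervalIntegral.integral_of_le ht.1, integral_Ioc_eq_integral_Ioo]
    refine (setIntegral_congr_fun measurableSet_Ioo fun s hs => ?_).symm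
    have hs' : s ∈ Icc (0:ℝ) T := ⟨hs.1.le, hs.2.le.trans ht.2⟩
    rw [hσeq s hs', hτeq s hs' t ⟨hs.2.le, ht.2⟩]
  have hvc : ContinuousOn v (Icc 0 T) := hwc.continuousOn.congr hvw
  have hUcont : ContinuousOn U (Icc 0 T) := ((hg.add hvc).congr hUv)
  refine ⟨hUcont, fun t ht => ?_⟩
  -- Fubini on the triangle
  set μ : Measure ℝ := volume.restrict (Ioc (0:ℝ) t) with hμdef
  set Ψ : ℝ × ℝ → E :=
    fun q => (A (τ q.1 q.2)) (S (τ q.1 q.2) (σ q.2) ((A (σ q.2)) (g (σ q.2)))) with hΨdef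
  have hD : MeasurableSet {p : ℝ × ℝ | p.2 < p.1} := measurableSet_lt measurable_snd measurable_fst
  have hΨint : Integrable ({p : ℝ × ℝ | p.2 < p.1}.indicator Ψ) (μ.prod μ) := by
    refine Integrable.indicator ?_ hD
    have h1 : IntegrableOn Ψ (Icc (0:ℝ) t ×ˢ Icc (0:ℝ) t) (volume.prod volume) :=
      hΨc.continuousOn.integrableOn_compact (isCompact_Icc.prod isCompact_Icc)
    have h2 := h1.mono_set (prod_mono Ioc_subset_Icc_self Ioc_subset_Icc_self)
    rwa [IntegrableOn, ← Measure.prod_restrict] at h2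
  have hswap := MeasureTheory.integral_integral_swap
    (f := fun s r => {p : ℝ × ℝ | p.2 < p.1}.indicator Ψ (s, r)) (μ := μ) (ν := μ) hΨint
  -- left inner integral
  have hleft : ∀ s ∈ Ioc (0:ℝ) t,
      (∫ r, {p : ℝ × ℝ | p.2 < p.1}.indicator Ψ (s, r) ∂μ) = (A s) (v s) := by
    intro s hs
    have hsT : s ∈ Icc (0:ℝ) T := ⟨hs.1.le, hs.2.trans ht.2⟩
    have e1 : (fun r => {p : ℝ × ℝ | p.2 < p.1}.indicator Ψ (s, r))
        = (Iio s).indicator (fun r => Ψ (s, r)) := by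
      funext r
      by_cases h : r < s <;> simp [Set.indicator_apply, h]
    rw [e1, integral_indicator measurableSet_Iio, hμdef,
      Measure.restrict_restrict measurableSet_Iio]
    have e2 : Iio s ∩ Ioc 0 t = Ioo 0 s := by
      ext r
      simp only [mem_inter_iff, mem_Iio, mem_Ioc, mem_Ioo]
      exact ⟨fun h => ⟨h.2.1, h.1⟩, fun h => ⟨h.2, h.1, (h.2.trans_le hs.2).le⟩⟩
    rw [e2]
    have e3 : EqOn (fun r => Ψ (s, r)) (fun r => (A s) (S s r ((A r) (g r)))) (Ioo 0 s) := by
      intro r hr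
      have hrT : r ∈ Icc (0:ℝ) T := ⟨hr.1.le, hr.2.le.trans hsT.2⟩
      simp only [hΨdef]
      rw [hσeq r hrT, hτeq r hrT s ⟨hr.2.le, hsT.2⟩]
    rw [setIntegral_congr_fun measurableSet_Ioo e3]
    have hint2 : IntegrableOn (fun r => S s r ((A r) (g r))) (Ioo 0 s) :=
      ((hfel s hsT).integrableOn_Icc).mono_set Ioo_subset_Icc_self
    rw [ContinuousLinearMap.integral_comp_comm (A s) hint2]
  -- right inner integral
  have hright : ∀ r ∈ Ioc (0:ℝ) t,
      (∫ s, {p : ℝ × ℝ | p.2 < p.1}.indicator Ψ (s, r) ∂μ)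
        = S t r ((A r) (g r)) - (A r) (g r) := by
    intro r hr
    have hrT : r ∈ Icc (0:ℝ) T := ⟨hr.1.le, hr.2.trans ht.2⟩
    have e1 : (fun s => {p : ℝ × ℝ | p.2 < p.1}.indicator Ψ (s, r))
        = (Ioi r).indicator (fun s => Ψ (s, r)) := by
      funext s
      by_cases h : r < s <;> simp [Set.indicator_apply, h]
    rw [e1, integral_indicator measurableSet_Ioi, hμdef,
      Measure.restrict_restrict measurableSet_Ioi]
    have e2 : Ioi r ∩ Ioc 0 t = Ioc r t := by
      ext s
      simp only [mem_inter_iff, mem_Ioi, mem_Ioc]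
      exact ⟨fun h => ⟨h.1, h.2.2⟩, fun h => ⟨h.1, hr.1.trans h.1, h.2⟩⟩
    rw [e2]
    have e3 : EqOn (fun s => Ψ (s, r)) (fun s => (A s) (S s r ((A r) (g r)))) (Ioc r t) := by
      intro s hs
      have hsT : s ∈ Icc r T := ⟨hs.1.le, hs.2.trans ht.2⟩
      simp only [hΨdef]
      rw [hσeq r hrT, hτeq r hrT s hsT]
    rw [setIntegral_congr_fun measurableSet_Ioc e3, ← intervalIntegral.integral_of_le hr.2]
    set y := (A r) (g r) with hy
    have hSr : ContinuousOn (fun s' => S s' r) (Icc r t) := by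
      have : ContinuousOn ((fun q : ℝ × ℝ => S q.1 q.2) ∘ fun s' => ((s', r) : ℝ × ℝ))
          (Icc r t) :=
        hScont.comp (Continuous.continuousOn (continuous_id.prodMk continuous_const))
          (fun s' hs' => ⟨hrT.1, hs'.1, hs'.2.trans ht.2⟩)
      exact this
    have hc : ContinuousOn (fun s' => S s' r y) (Icc r t) := hSr.clm_apply continuousOn_const
    have hc' : ContinuousOn (fun s' => (A s') (S s' r y)) (Icc r t) :=
      ((hA.mono (Icc_subset_Icc hrT.1 ht.2)).clm_apply hc)
    have hd : ∀ s' ∈ Icc r t,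
        HasDerivWithinAt (fun q => S q r y) ((A s') (S s' r y)) (Icc r t) s' := by
      intro s' hs'
      have h0 := (hSderiv_t r hrT s' ⟨hs'.1, hs'.2.trans ht.2⟩).mono
        (Icc_subset_Icc le_rfl ht.2)
      have := h0.clm_apply (hasDerivWithinAt_const s' (Icc r t) y)
      simpa using this
    have hint := ftc_aux hr.2 hc hd hc'
    rw [hSid r hrT] at hint
    simpa using hint
  -- assemble
  have hL : (∫ s, (∫ r, {p : ℝ × ℝ | p.2 < p.1}.indicator Ψ (s, r) ∂μ) ∂μ)
      = ∫ s in Ioc (0:ℝ) t, (A s) (v s) := by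
    rw [hμdef]
    exact setIntegral_congr_fun measurableSet_Ioc hleft
  have hR : (∫ r, (∫ s, {p : ℝ × ℝ | p.2 < p.1}.indicator Ψ (s, r) ∂μ) ∂μ)
      = ∫ r in Ioc (0:ℝ) t, (S t r ((A r) (g r)) - (A r) (g r)) := by
    rw [hμdef]
    exact setIntegral_congr_fun measurableSet_Ioc hright
  have htT : Icc (0:ℝ) t ⊆ Icc 0 T := hsubT t ht
  have hAg_int : IntegrableOn (fun r => (A r) (g r)) (Ioc 0 t) :=
    (((hA.mono htT).clm_apply (hg.mono htT)).integrableOn_Icc).mono_set Ioc_subset_Icc_self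
  have hStr_int : IntegrableOn (fun r => S t r ((A r) (g r))) (Ioc 0 t) :=
    ((hfel t ht).integrableOn_Icc).mono_set Ioc_subset_Icc_self
  have hRval : (∫ r in Ioc (0:ℝ) t, (S t r ((A r) (g r)) - (A r) (g r)))
      = v t - ∫ r in Ioc (0:ℝ) t, (A r) (g r) := by
    rw [integral_sub hStr_int hAg_int]
    congr 1
    rw [hvdef]
    exact integral_Ioc_eq_integral_Ioo
  have hAv : (∫ s in Ioc (0:ℝ) t, (A s) (v s)) = v t - ∫ r in Ioc (0:ℝ) t, (A r) (g r) :=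
    hL.symm.trans (hswap.trans (hR.trans hRval))
  have hAv_int : IntegrableOn (fun s => (A s) (v s)) (Ioc 0 t) :=
    (((hA.mono htT).clm_apply ((hvc.mono htT).mono (fun x hx => hx))).integrableOn_Icc).mono_set
      Ioc_subset_Icc_self
  have hAU : (∫ s in Ioo (0:ℝ) t, (A s) (U s)) = v t := by
    rw [← integral_Ioc_eq_integral_Ioo]
    have e : EqOn (fun s => (A s) (U s)) (fun s => (A s) (g s) + (A s) (v s)) (Ioc 0 t) := by
      intro s hs
      simp only
      rw [hUv s ⟨hs.1.le, hs.2.trans ht.2⟩, map_add]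
    rw [setIntegral_congr_fun measurableSet_Ioc e, integral_add hAg_int hAv_int, hAv]
    abel
  rw [hAU, hUv t ht, add_comm]
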